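/- Let t ≥ 1 be an integer. (i) For every u ∈ 𝔫^{≥t}, the endomorphism id_V + u is invertible and (id_V + u)^{−1} ∘ X ∘ (id_V + u) − X belongs to 𝔬^{≥t}. (ii) For every Y ∈ 𝔬^{≥t} there exists u ∈ 𝔫^{≥t} such that Y − (X ∘ u − u ∘ X) belongs to 𝔬^{≥t+1}. -/

import Mathlib

/-- Index type of the standard basis `e(i,j,k)`: triples `(i,j,k)` with
`1 ≤ i ≤ j ≤ r`, `1 ≤ k ≤ d j`. -/
def RIdx (r : ℕ) (d : ℕ → ℕ) : Type :=
  {x : ℕ × ℕ × ℕ //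
    1 ≤ x.1 ∧ x.1 ≤ x.2.1 ∧ x.2.1 ≤ r ∧ 1 ≤ x.2.2 ∧ x.2.2 ≤ d x.2.1}

/-- The weight `p(i,j) = (i−1)(2r−i+2)/2 + (r−j+1)`. -/
def pfun (r i j : ℕ) : ℤ :=
  ((i : ℤ) - 1) * (2 * (r : ℤ) - (i : ℤ) + 2) / 2 + ((r : ℤ) - (j : ℤ) + 1)

/-- `𝔫^{≥t}`: endomorphisms all of whose nonzero blocks (matrix entries in the basis
`e`) occur for pairs with `p(i,j) − p(i',j') ≥ t`. -/
def nGE {F : Type*} [Field F] {V : Type*} [AddCommGroup V] [Module F V]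
    (r : ℕ) (d : ℕ → ℕ) (e : Module.Basis (RIdx r d) F V) (t : ℤ) :
    Set (Module.End F V) :=
  {A | ∀ x y : RIdx r d, e.repr (A (e x)) y ≠ 0 →
    t ≤ pfun r x.val.1 x.val.2.1 - pfun r y.val.1 y.val.2.1}

/-- `𝔬^{≥t}`: endomorphisms all of whose nonzero blocks occur for pairs with
`i > 1` and `p(i−1,j) − p(i',j') ≥ t`. -/
def oGE {F : Type*} [Field F] {V : Type*} [AddCommGroup V] [Module F V]
    (r : ℕ) (d : ℕ → ℕ) (e : Module.Basis (RIdx r d) F V) (t : ℤ) :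
    Set (Module.End F V) :=
  {A | ∀ x y : RIdx r d, e.repr (A (e x)) y ≠ 0 →
    1 < x.val.1 ∧
      t ≤ pfun r (x.val.1 - 1) x.val.2.1 - pfun r y.val.1 y.val.2.1}

namespace S13

lemma two_pfun (r i j : ℕ) :
    2 * pfun r i j = ((i : ℤ) - 1) * (2 * (r : ℤ) - (i : ℤ) + 2) + 2 * ((r : ℤ) - (j : ℤ) + 1) := by
  have hdvd : (2 : ℤ) ∣ ((i : ℤ) - 1) * (2 * (r : ℤ) - (i : ℤ) + 2) := by
    rcases Int.even_or_odd ((i : ℤ) - 1) with h | h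
    · exact (h.mul_right _).two_dvd
    · obtain ⟨k, hk⟩ := h
      have : Even (2 * (r : ℤ) - (i : ℤ) + 2) := ⟨(r : ℤ) - k, by omega⟩
      exact (this.mul_left _).two_dvd
  unfold pfun
  rw [mul_add, Int.mul_ediv_cancel' hdvd]

lemma pfun_mono {r i j i' j' : ℕ} (h1 : 1 ≤ i) (h2 : i ≤ j) (h3 : j ≤ r)
    (h1' : 1 ≤ i') (h2' : i' ≤ j') (h3' : j' ≤ r) (h : i < i') :
    pfun r i j < pfun r i' j' := by
  have e1 := two_pfun r i j
  have e2 := two_pfun r i' j'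
  have hi : (i : ℤ) + 1 ≤ (i' : ℤ) := by exact_mod_cast h
  have hj : (i : ℤ) ≤ (j : ℤ) := by exact_mod_cast h2
  have hj' : (i' : ℤ) ≤ (j' : ℤ) := by exact_mod_cast h2'
  have hr : (j : ℤ) ≤ (r : ℤ) := by exact_mod_cast h3
  have hr' : (j' : ℤ) ≤ (r : ℤ) := by exact_mod_cast h3'
  have h1z : (1 : ℤ) ≤ (i : ℤ) := by exact_mod_cast h1
  nlinarith [mul_nonneg (by linarith : (0:ℤ) ≤ (i' : ℤ) - (i : ℤ) - 1)
    (by linarith : (0:ℤ) ≤ 2 * (r : ℤ) + 3 - (i : ℤ) - (i' : ℤ))]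

lemma pfun_gap (r i s j : ℕ) (hs : s ≤ i) :
    2 * (pfun r i j - pfun r (i - s) j) = (s : ℤ) * (2 * (r : ℤ) + 3 + (s : ℤ) - 2 * (i : ℤ)) := by
  have e1 := two_pfun r i j
  have e2 := two_pfun r (i - s) j
  have hc : ((i - s : ℕ) : ℤ) = (i : ℤ) - (s : ℤ) := by omega
  rw [hc] at e2
  linear_combination e1 - e2

def upI {r : ℕ} {d : ℕ → ℕ} (x : RIdx r d) (m : ℕ) (h : x.val.1 + m ≤ x.val.2.1) : RIdx r d :=
  ⟨(x.val.1 + m, x.val.2.1, x.val.2.2), by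
    obtain ⟨h1, h2, h3, h4, h5⟩ := x.prop
    refine ⟨?_, ?_, ?_, ?_, ?_⟩ <;> simp only [] <;> omega⟩

def dnI {r : ℕ} {d : ℕ → ℕ} (x : RIdx r d) (m : ℕ) (h : m < x.val.1) : RIdx r d :=
  ⟨(x.val.1 - m, x.val.2.1, x.val.2.2), by
    obtain ⟨h1, h2, h3, h4, h5⟩ := x.prop
    refine ⟨?_, ?_, ?_, ?_, ?_⟩ <;> simp only [] <;> omega⟩

variable {r : ℕ} {d : ℕ → ℕ} {F : Type*} [Field F] {V : Type*} [AddCommGroup V] [Module F V]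

lemma ridx_ext {x y : RIdx r d} (h1 : x.val.1 = y.val.1) (h2 : x.val.2.1 = y.val.2.1)
    (h3 : x.val.2.2 = y.val.2.2) : x = y := by
  apply Subtype.ext
  exact Prod.ext h1 (Prod.ext h2 h3)

lemma repr_basis_ne (e : Module.Basis (RIdx r d) F V) {w y : RIdx r d}
    (h : e.repr (e w) y ≠ 0) : y = w := by
  classical
  rw [e.repr_self, Finsupp.single_apply] at h
  by_contra hne
  exact h (if_neg (fun hh => hne hh.symm))

/-- workhorse: nonzero entry of a composition comes from a chain. -/
lemma repr_comp_ne (e : Module.Basis (RIdx r d) F V) (A B : Module.End F V) (x : RIdx r d)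
    (y : RIdx r d) (h : e.repr ((A * B) (e x)) y ≠ 0) :
    ∃ z, e.repr (B (e x)) z ≠ 0 ∧ e.repr (A (e z)) y ≠ 0 := by
  classical
  by_contra hc
  push_neg at hc
  apply h
  have hv : (A * B) (e x) = A (B (e x)) := rfl
  rw [hv]
  set v := B (e x) with hvdef
  have hrepr : A v = (e.repr v).sum fun z c => c • A (e z) := by
    conv_lhs => rw [← e.linearCombination_repr v]
    rw [Finsupp.linearCombination_apply, map_finsuppSum]
    simp [map_smul]
  rw [hrepr, map_finsuppSum, Finsupp.sum_apply, Finsupp.sum]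
  apply Finset.sum_eq_zero
  intro z hz
  rw [Finsupp.mem_support_iff] at hz
  simp [hc z hz]

noncomputable def Zop (e : Module.Basis (RIdx r d) F V) : Module.End F V :=
  e.constr F fun x => if h : x.val.1 < x.val.2.1 then e (upI x 1 (by omega)) else 0

noncomputable def PbP (e : Module.Basis (RIdx r d) F V) : Module.End F V :=
  e.constr F fun x => if x.val.1 = 1 then e x else 0

noncomputable def PtP (e : Module.Basis (RIdx r d) F V) : Module.End F V :=
  e.constr F fun x => if x.val.1 = x.val.2.1 then e x else 0

noncomputable def trunc (e : Module.Basis (RIdx r d) F V) (P : RIdx r d → RIdx r d → Prop)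
    [∀ x, DecidablePred (P x)] (A : Module.End F V) : Module.End F V :=
  e.constr F fun x => e.repr.symm ((e.repr (A (e x))).filter (P x))

lemma Zop_apply (e : Module.Basis (RIdx r d) F V) (x : RIdx r d) :
    Zop e (e x) = if h : x.val.1 < x.val.2.1 then e (upI x 1 (by omega)) else 0 := by
  rw [Zop, Module.Basis.constr_basis]

lemma PbP_apply (e : Module.Basis (RIdx r d) F V) (x : RIdx r d) :
    PbP e (e x) = if x.val.1 = 1 then e x else 0 := by
  rw [PbP, Module.Basis.constr_basis]

lemma PtP_apply (e : Module.Basis (RIdx r d) F V) (x : RIdx r d) :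
    PtP e (e x) = if x.val.1 = x.val.2.1 then e x else 0 := by
  rw [PtP, Module.Basis.constr_basis]

lemma trunc_repr (e : Module.Basis (RIdx r d) F V) (P : RIdx r d → RIdx r d → Prop)
    [∀ x, DecidablePred (P x)] (A : Module.End F V) (x : RIdx r d) :
    e.repr (trunc e P A (e x)) = (e.repr (A (e x))).filter (P x) := by
  rw [trunc, Module.Basis.constr_basis, LinearEquiv.apply_symm_apply]

lemma repr_trunc_ne (e : Module.Basis (RIdx r d) F V) (P : RIdx r d → RIdx r d → Prop)
    [∀ x, DecidablePred (P x)] (A : Module.End F V) {x y : RIdx r d}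
    (h : e.repr (trunc e P A (e x)) y ≠ 0) :
    P x y ∧ e.repr (A (e x)) y ≠ 0 := by
  rw [trunc_repr, Finsupp.filter_apply] at h
  by_cases hp : P x y
  · rw [if_pos hp] at h; exact ⟨hp, h⟩
  · rw [if_neg hp] at h; exact absurd rfl h

lemma Zpow_apply (e : Module.Basis (RIdx r d) F V) (s : ℕ) (x : RIdx r d) :
    (Zop e ^ s) (e x) = if h : x.val.1 + s ≤ x.val.2.1 then e (upI x s h) else 0 := by
  induction s generalizing x with
  | zero =>
    rw [pow_zero]
    have hx : x.val.1 + 0 ≤ x.val.2.1 := by have := x.prop.2.1; omega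
    rw [dif_pos hx]
    have : upI x 0 hx = x := ridx_ext rfl rfl rfl
    rw [this, Module.End.one_apply]
  | succ s ih =>
    rw [pow_succ, Module.End.mul_apply, Zop_apply]
    by_cases h1 : x.val.1 < x.val.2.1
    · rw [dif_pos h1, ih]
      by_cases h2 : x.val.1 + (s + 1) ≤ x.val.2.1
      · have hc : (upI x 1 (by omega)).val.1 + s ≤ (upI x 1 (by omega)).val.2.1 := by
          show x.val.1 + 1 + s ≤ x.val.2.1; omega
        rw [dif_pos hc, dif_pos h2]
        congr 1
        exact ridx_ext (by show x.val.1 + 1 + s = x.val.1 + (s+1); omega) rfl rfl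
      · have hc : ¬ ((upI x 1 (by omega)).val.1 + s ≤ (upI x 1 (by omega)).val.2.1) := by
          show ¬ (x.val.1 + 1 + s ≤ x.val.2.1); omega
        rw [dif_neg hc, dif_neg h2]
    · have hle : x.val.1 ≤ x.val.2.1 := x.prop.2.1
      rw [dif_neg h1, map_zero, dif_neg (by omega)]

section Xlem

variable (e : Module.Basis (RIdx r d) F V) (X : Module.End F V)
variable (hX0 : ∀ x : RIdx r d, x.val.1 = 1 → X (e x) = 0)
variable (hXs : ∀ x y : RIdx r d, x.val.1 = y.val.1 + 1 → x.val.2 = y.val.2 → X (e x) = e y)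

include hX0 hXs

lemma X_apply (x : RIdx r d) :
    X (e x) = if h : 1 < x.val.1 then e (dnI x 1 h) else 0 := by
  by_cases h : 1 < x.val.1
  · rw [dif_pos h]
    exact hXs x (dnI x 1 h) (by show x.val.1 = x.val.1 - 1 + 1; omega) rfl
  · rw [dif_neg h]
    exact hX0 x (by have := x.prop.1; omega)

lemma Xpow_apply (s : ℕ) (x : RIdx r d) :
    (X ^ s) (e x) = if h : s < x.val.1 then e (dnI x s h) else 0 := by
  induction s generalizing x with
  | zero =>
    rw [pow_zero]
    have hx : 0 < x.val.1 := x.prop.1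
    rw [dif_pos hx]
    have : dnI x 0 hx = x := ridx_ext (by show x.val.1 - 0 = x.val.1; omega) rfl rfl
    rw [this, Module.End.one_apply]
  | succ s ih =>
    rw [pow_succ, Module.End.mul_apply, X_apply e X hX0 hXs]
    by_cases h1 : 1 < x.val.1
    · rw [dif_pos h1, ih]
      by_cases h2 : s + 1 < x.val.1
      · have hc : s < (dnI x 1 h1).val.1 := by show s < x.val.1 - 1; omega
        rw [dif_pos hc, dif_pos h2]
        congr 1
        exact ridx_ext (by show x.val.1 - 1 - s = x.val.1 - (s + 1); omega) rfl rfl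
      · have hc : ¬ s < (dnI x 1 h1).val.1 := by show ¬ s < x.val.1 - 1; omega
        rw [dif_neg hc, dif_neg h2]
    · rw [dif_neg h1, map_zero, dif_neg (by omega)]

lemma Xpow_r : X ^ r = 0 := by
  apply Module.Basis.ext e
  intro x
  rw [Xpow_apply e X hX0 hXs, LinearMap.zero_apply,
    dif_neg (by have := x.prop.2.1; have := x.prop.2.2.1; omega)]

lemma Xpow_kill (s : ℕ) (g : RIdx r d →₀ F) (hg : ∀ w, g w ≠ 0 → w.val.1 ≤ s) :
    (X ^ s) (e.repr.symm g) = 0 := by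
  rw [Module.Basis.repr_symm_apply, Finsupp.linearCombination_apply, map_finsuppSum, Finsupp.sum]
  apply Finset.sum_eq_zero
  intro w hw
  rw [Finsupp.mem_support_iff] at hw
  rw [map_smul, Xpow_apply e X hX0 hXs, dif_neg (by have := hg w hw; omega), smul_zero]

lemma repr_Xpow_ne {s : ℕ} {x y : RIdx r d} (h : e.repr ((X ^ s) (e x)) y ≠ 0) :
    s < x.val.1 ∧ y.val.1 = x.val.1 - s ∧ y.val.2 = x.val.2 := by
  rw [Xpow_apply e X hX0 hXs] at h
  by_cases hc : s < x.val.1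
  · rw [dif_pos hc] at h
    have := repr_basis_ne e h
    subst this
    exact ⟨hc, rfl, rfl⟩
  · rw [dif_neg hc, map_zero] at h
    exact absurd rfl h

end Xlem

lemma Pt_kill (e : Module.Basis (RIdx r d) F V) (g : RIdx r d →₀ F)
    (hg : ∀ w, g w ≠ 0 → w.val.1 ≠ w.val.2.1) : PtP e (e.repr.symm g) = 0 := by
  rw [Module.Basis.repr_symm_apply, Finsupp.linearCombination_apply, map_finsuppSum, Finsupp.sum]
  apply Finset.sum_eq_zero
  intro w hw
  rw [Finsupp.mem_support_iff] at hw
  rw [map_smul, PtP_apply, if_neg (hg w hw), smul_zero]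

lemma repr_Zpow_ne (e : Module.Basis (RIdx r d) F V) {s : ℕ} {x y : RIdx r d}
    (h : e.repr ((Zop e ^ s) (e x)) y ≠ 0) :
    x.val.1 + s ≤ x.val.2.1 ∧ y.val.1 = x.val.1 + s ∧ y.val.2 = x.val.2 := by
  rw [Zpow_apply] at h
  by_cases hc : x.val.1 + s ≤ x.val.2.1
  · rw [dif_pos hc] at h
    have := repr_basis_ne e h
    subst this
    exact ⟨hc, rfl, rfl⟩
  · rw [dif_neg hc, map_zero] at h
    exact absurd rfl h

lemma repr_Z_ne (e : Module.Basis (RIdx r d) F V) {x y : RIdx r d}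
    (h : e.repr (Zop e (e x)) y ≠ 0) :
    x.val.1 + 1 ≤ x.val.2.1 ∧ y.val.1 = x.val.1 + 1 ∧ y.val.2 = x.val.2 := by
  have h' : e.repr ((Zop e ^ 1) (e x)) y ≠ 0 := by rwa [pow_one]
  exact repr_Zpow_ne e h'

lemma repr_Pt_ne (e : Module.Basis (RIdx r d) F V) {x y : RIdx r d}
    (h : e.repr (PtP e (e x)) y ≠ 0) : y = x ∧ x.val.1 = x.val.2.1 := by
  rw [PtP_apply] at h
  by_cases hc : x.val.1 = x.val.2.1
  · rw [if_pos hc] at h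
    exact ⟨repr_basis_ne e h, hc⟩
  · rw [if_neg hc, map_zero] at h
    exact absurd rfl h

lemma repr_Pb_ne (e : Module.Basis (RIdx r d) F V) {x y : RIdx r d}
    (h : e.repr (PbP e (e x)) y ≠ 0) : y = x ∧ x.val.1 = 1 := by
  rw [PbP_apply] at h
  by_cases hc : x.val.1 = 1
  · rw [if_pos hc] at h
    exact ⟨repr_basis_ne e h, hc⟩
  · rw [if_neg hc, map_zero] at h
    exact absurd rfl h

section Rel

variable (e : Module.Basis (RIdx r d) F V) (X : Module.End F V)
variable (hX0 : ∀ x : RIdx r d, x.val.1 = 1 → X (e x) = 0)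
variable (hXs : ∀ x y : RIdx r d, x.val.1 = y.val.1 + 1 → x.val.2 = y.val.2 → X (e x) = e y)

include hX0 hXs

lemma XZ_rel : X * Zop e = 1 - PtP e := by
  apply Module.Basis.ext e
  intro x
  rw [Module.End.mul_apply, Zop_apply, LinearMap.sub_apply, Module.End.one_apply, PtP_apply]
  by_cases h : x.val.1 < x.val.2.1
  · rw [dif_pos h, if_neg (by omega), X_apply e X hX0 hXs,
      dif_pos (show 1 < (upI x 1 (by omega)).val.1 by
        show 1 < x.val.1 + 1; have := x.prop.1; omega)]
    rw [sub_zero]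
    congr 1
  · have hx : x.val.1 = x.val.2.1 := by have := x.prop.2.1; omega
    rw [dif_neg h, if_pos hx, map_zero, sub_self]

lemma ZX_rel : Zop e * X = 1 - PbP e := by
  apply Module.Basis.ext e
  intro x
  rw [Module.End.mul_apply, X_apply e X hX0 hXs, LinearMap.sub_apply, Module.End.one_apply,
    PbP_apply]
  by_cases h : 1 < x.val.1
  · rw [dif_pos h, if_neg (by omega), Zop_apply,
      dif_pos (show (dnI x 1 h).val.1 < (dnI x 1 h).val.2.1 by
        show x.val.1 - 1 < x.val.2.1; have := x.prop.2.1; omega)]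
    rw [sub_zero]
    congr 1
    exact ridx_ext (by show x.val.1 - 1 + 1 = x.val.1; omega) rfl rfl
  · have hx : x.val.1 = 1 := by have := x.prop.1; omega
    rw [dif_neg h, if_pos hx, map_zero, sub_self]

end Rel

section Memb

variable {e : Module.Basis (RIdx r d) F V}

lemma mem_nGE {t : ℤ} {A : Module.End F V} :
    A ∈ nGE r d e t ↔ ∀ x y : RIdx r d, e.repr (A (e x)) y ≠ 0 →
      t ≤ pfun r x.val.1 x.val.2.1 - pfun r y.val.1 y.val.2.1 := Iff.rfl

lemma mem_oGE {t : ℤ} {A : Module.End F V} :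
    A ∈ oGE r d e t ↔ ∀ x y : RIdx r d, e.repr (A (e x)) y ≠ 0 →
      1 < x.val.1 ∧
        t ≤ pfun r (x.val.1 - 1) x.val.2.1 - pfun r y.val.1 y.val.2.1 := Iff.rfl

lemma nGE_mono {s t : ℤ} (hst : s ≤ t) {A : Module.End F V} (hA : A ∈ nGE r d e t) :
    A ∈ nGE r d e s := fun x y h => le_trans hst (hA x y h)

lemma one_mem_nGE : (1 : Module.End F V) ∈ nGE r d e 0 := by
  intro x y h
  rw [Module.End.one_apply] at h
  rw [repr_basis_ne e h]
  omega

lemma nGE_mul {a b : ℤ} {A B : Module.End F V} (hA : A ∈ nGE r d e a) (hB : B ∈ nGE r d e b) :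
    A * B ∈ nGE r d e (a + b) := by
  intro x y h
  obtain ⟨z, h1, h2⟩ := repr_comp_ne e A B x y h
  have := hB x z h1
  have := hA z y h2
  omega

lemma nGE_neg {a : ℤ} {A : Module.End F V} (hA : A ∈ nGE r d e a) : -A ∈ nGE r d e a := by
  intro x y h
  apply hA x y
  simp only [LinearMap.neg_apply, map_neg, Finsupp.neg_apply, ne_eq, neg_eq_zero] at h
  exact h

lemma nGE_pow {t : ℤ} (htt : 0 ≤ t) {u : Module.End F V} (hu : u ∈ nGE r d e t) (m : ℕ) :
    u ^ m ∈ nGE r d e ((m : ℤ) * t) := by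
  induction m with
  | zero => simpa using one_mem_nGE
  | succ m ih =>
    have : ((m : ℤ) + 1) * t = (m : ℤ) * t + t := by ring
    rw [pow_succ]
    push_cast
    rw [this]
    exact nGE_mul ih hu

lemma nGE_sum {t : ℤ} {ι : Type*} (s : Finset ι) (f : ι → Module.End F V)
    (hf : ∀ i ∈ s, f i ∈ nGE r d e t) : (∑ i ∈ s, f i) ∈ nGE r d e t := by
  intro x y h
  rw [LinearMap.sum_apply] at h
  rw [map_sum, Finsupp.finset_sum_apply] at h
  obtain ⟨i, hi, hne⟩ := Finset.exists_ne_zero_of_sum_ne_zero h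
  exact hf i hi x y hne

lemma pfun_lb {i j : ℕ} (h1 : 1 ≤ i) (h2 : i ≤ j) (h3 : j ≤ r) : 1 ≤ pfun r i j := by
  have e1 := two_pfun r i j
  have h1z : (1 : ℤ) ≤ (i : ℤ) := by exact_mod_cast h1
  have hj : (i : ℤ) ≤ (j : ℤ) := by exact_mod_cast h2
  have hrz : (j : ℤ) ≤ (r : ℤ) := by exact_mod_cast h3
  nlinarith [mul_nonneg (by linarith : (0:ℤ) ≤ (i:ℤ) - 1) (by linarith : (0:ℤ) ≤ 2*(r:ℤ) - i + 2)]

lemma pfun_ub {i j : ℕ} (h1 : 1 ≤ i) (h2 : i ≤ j) (h3 : j ≤ r) :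
    2 * pfun r i j ≤ ((r:ℤ) - 1) * (2*(r:ℤ) + 1) + 2 * (r:ℤ) := by
  have e1 := two_pfun r i j
  have h1z : (1 : ℤ) ≤ (i : ℤ) := by exact_mod_cast h1
  have hj : (i : ℤ) ≤ (j : ℤ) := by exact_mod_cast h2
  have hrz : (j : ℤ) ≤ (r : ℤ) := by exact_mod_cast h3
  have hm : ((i:ℤ) - 1) * (2*(r:ℤ) - i + 2) ≤ ((r:ℤ) - 1) * (2*(r:ℤ) + 1) := by
    apply mul_le_mul (by linarith) (by linarith) (by linarith) (by linarith)
  linarith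

lemma nGE_eq_zero {T : ℤ} {A : Module.End F V}
    (hA : A ∈ nGE r d e T) (hT : ((r:ℤ) - 1) * (2*(r:ℤ) + 1) + 2*(r:ℤ) - 2 < 2 * T) :
    A = 0 := by
  apply Module.Basis.ext e
  intro x
  rw [LinearMap.zero_apply]
  rw [← e.repr.map_eq_zero_iff]
  ext y
  rw [Finsupp.zero_apply]
  by_contra h
  have hmem := hA x y h
  obtain ⟨hx1, hx2, hx3, -, -⟩ := x.prop
  obtain ⟨hy1, hy2, hy3, -, -⟩ := y.prop
  have b1 := pfun_ub (r := r) hx1 hx2 hx3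
  have b2 := pfun_lb (r := r) hy1 hy2 hy3
  linarith

lemma oGE_add {t : ℤ} {A B : Module.End F V} (hA : A ∈ oGE r d e t) (hB : B ∈ oGE r d e t) :
    A + B ∈ oGE r d e t := by
  intro x y h
  rw [LinearMap.add_apply, map_add, Finsupp.add_apply] at h
  rcases (by by_contra hc; push_neg at hc; rw [hc.1, hc.2, add_zero] at h; exact h rfl :
      e.repr (A (e x)) y ≠ 0 ∨ e.repr (B (e x)) y ≠ 0) with h' | h'
  · exact hA x y h'
  · exact hB x y h'

lemma nGE0_mul_oGE {t : ℤ} {A C : Module.End F V} (hA : A ∈ nGE r d e 0)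
    (hC : C ∈ oGE r d e t) : A * C ∈ oGE r d e t := by
  intro x y h
  obtain ⟨z, h1, h2⟩ := repr_comp_ne e A C x y h
  obtain ⟨hx, hp⟩ := hC x z h1
  have := hA z y h2
  exact ⟨hx, by omega⟩

end Memb

section Part1

variable (e : Module.Basis (RIdx r d) F V) (X : Module.End F V)
variable (hX0 : ∀ x : RIdx r d, x.val.1 = 1 → X (e x) = 0)
variable (hXs : ∀ x y : RIdx r d, x.val.1 = y.val.1 + 1 → x.val.2 = y.val.2 → X (e x) = e y)

lemma geomL (u : Module.End F V) (n : ℕ) :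
    (1 + u) * (∑ k ∈ Finset.range n, (-u) ^ k) = 1 - (-u) ^ n := by
  induction n with
  | zero => simp
  | succ n ih =>
    rw [Finset.sum_range_succ, mul_add, ih]
    have h1 : (1 + u) * (-u) ^ n = (-u) ^ n + u * (-u) ^ n := by
      rw [add_mul, one_mul]
    have h2 : u * (-u) ^ n = -(-u) ^ (n + 1) := by
      rw [pow_succ', neg_mul, neg_neg]
    rw [h1, h2]
    abel

lemma geomR (u : Module.End F V) (n : ℕ) :
    (∑ k ∈ Finset.range n, (-u) ^ k) * (1 + u) = 1 - (-u) ^ n := by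
  induction n with
  | zero => simp
  | succ n ih =>
    rw [Finset.sum_range_succ, add_mul, ih]
    have h1 : (-u) ^ n * (1 + u) = (-u) ^ n + (-u) ^ n * u := by
      rw [mul_add, mul_one]
    have h2 : (-u) ^ n * u = -(-u) ^ (n + 1) := by
      rw [pow_succ, mul_neg, neg_neg]
    rw [h1, h2]
    abel

include hX0 hXs in
lemma comm_mem_oGE {t : ℤ} (ht : 1 ≤ t) {u : Module.End F V} (hu : u ∈ nGE r d e t) :
    X * u - u * X ∈ oGE r d e t := by
  intro x y h
  rw [LinearMap.sub_apply, map_sub, Finsupp.sub_apply] at h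
  have hcase : e.repr ((X * u) (e x)) y ≠ 0 ∨ e.repr ((u * X) (e x)) y ≠ 0 := by
    by_contra hc; push_neg at hc; rw [hc.1, hc.2, sub_zero] at h; exact h rfl
  obtain ⟨hx1, hx2, hx3, -, -⟩ := x.prop
  obtain ⟨hy1, hy2, hy3, -, -⟩ := y.prop
  rcases hcase with h' | h'
  · obtain ⟨z, h1, h2⟩ := repr_comp_ne e X u x y h'
    have h2' : e.repr ((X ^ 1) (e z)) y ≠ 0 := by rwa [pow_one]
    obtain ⟨hz1, hz2, hz3⟩ := repr_Xpow_ne e X hX0 hXs h2'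
    obtain ⟨hzp1, hzp2, hzp3, -, -⟩ := z.prop
    have hup := hu x z h1
    -- x.val.1 ≥ z.val.1, else pfun_mono contradiction
    have hxz : z.val.1 ≤ x.val.1 := by
      by_contra hlt
      push_neg at hlt
      have := pfun_mono hx1 hx2 hx3 hzp1 hzp2 hzp3 hlt
      omega
    have hjz : z.val.2.1 = y.val.2.1 := by rw [← hz3]
    have g1 := pfun_gap r x.val.1 1 x.val.2.1 (by omega)
    have g2 := pfun_gap r z.val.1 1 z.val.2.1 (by omega)
    have hy1' : pfun r y.val.1 y.val.2.1 = pfun r (z.val.1 - 1) z.val.2.1 := by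
      rw [hz2, hjz]
    constructor
    · omega
    · rw [hy1']
      have hcast : (z.val.1 : ℤ) ≤ (x.val.1 : ℤ) := by exact_mod_cast hxz
      push_cast at g1 g2
      linarith
  · obtain ⟨z, h1, h2⟩ := repr_comp_ne e u X x y h'
    have h1' : e.repr ((X ^ 1) (e x)) z ≠ 0 := by rwa [pow_one]
    obtain ⟨hz1, hz2, hz3⟩ := repr_Xpow_ne e X hX0 hXs h1'
    have hup := hu z y h2
    have hz2' : z.val.1 = x.val.1 - 1 := hz2
    have hjz : z.val.2.1 = x.val.2.1 := by rw [hz3]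
    refine ⟨by omega, ?_⟩
    rw [show pfun r (x.val.1 - 1) x.val.2.1 = pfun r z.val.1 z.val.2.1 by rw [hz2', hjz]]
    exact hup

include hX0 hXs in
lemma part1 {t : ℤ} (ht : 1 ≤ t) (u : Module.End F V) (hu : u ∈ nGE r d e t) :
    ∃ B : Module.End F V,
      B * (1 + u) = 1 ∧ (1 + u) * B = 1 ∧ B * X * (1 + u) - X ∈ oGE r d e t := by
  classical
  set m := (r + 1) * (r + 1) with hm
  have hm1 : 1 ≤ m := by rw [hm]; nlinarith [Nat.zero_le r]
  have hnegu : -u ∈ nGE r d e t := nGE_neg hu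
  have hnil : (-u) ^ m = 0 := by
    apply nGE_eq_zero (nGE_pow (by omega) hnegu m)
    have hc : ((m : ℕ) : ℤ) = ((r : ℤ) + 1) * ((r : ℤ) + 1) := by push_cast [hm]; ring
    have hmt : ((m : ℕ) : ℤ) ≤ ((m : ℕ) : ℤ) * t := by
      nlinarith [hc, sq_nonneg ((r : ℤ) + 1)]
    nlinarith [hc, hmt]
  set B := ∑ k ∈ Finset.range m, (-u) ^ k with hB
  have hB1 : B * (1 + u) = 1 := by rw [hB, geomR, hnil, sub_zero]
  have hB2 : (1 + u) * B = 1 := by rw [hB, geomL, hnil, sub_zero]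
  refine ⟨B, hB1, hB2, ?_⟩
  -- B = 1 + v
  set v := ∑ k ∈ Finset.Ico 1 m, (-u) ^ k with hv
  have hBv : B = 1 + v := by
    rw [hB, hv, Finset.range_eq_Ico, Finset.sum_eq_sum_Ico_succ_bot (by omega), pow_zero]
  have hvmem : v ∈ nGE r d e t := by
    apply nGE_sum
    intro k hk
    rw [Finset.mem_Ico] at hk
    apply nGE_mono _ (nGE_pow (by omega) hnegu k)
    have : (1 : ℤ) ≤ (k : ℤ) := by exact_mod_cast hk.1
    nlinarith
  have hC : X * u - u * X ∈ oGE r d e t := comm_mem_oGE e X hX0 hXs ht hu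
  have hBu : B * u = 1 - B := by
    have h' : B + B * u = 1 := by rw [← mul_one B, mul_assoc, one_mul, ← mul_add, hB1]
    rw [eq_sub_iff_add_eq, add_comm]
    exact h'
  have e1 : B * (X * u - u * X) = B * X * (1 + u) - X := by
    rw [mul_sub, ← mul_assoc, ← mul_assoc, hBu, sub_mul, one_mul, mul_add, mul_one]
    abel
  rw [← e1, hBv, add_mul, one_mul]
  exact oGE_add hC (nGE0_mul_oGE (nGE_mono (by omega) hvmem) hC)

end Part1

section Part2

variable (e : Module.Basis (RIdx r d) F V) (X : Module.End F V)
variable (hX0 : ∀ x : RIdx r d, x.val.1 = 1 → X (e x) = 0)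
variable (hXs : ∀ x y : RIdx r d, x.val.1 = y.val.1 + 1 → x.val.2 = y.val.2 → X (e x) = e y)

noncomputable def Ydn (Y : Module.End F V) : Module.End F V :=
  trunc e (fun x y => y.val.1 < x.val.1) Y

noncomputable def Yup (Y : Module.End F V) : Module.End F V :=
  trunc e (fun x y => ¬ y.val.1 < x.val.1) Y

lemma Ydn_add_Yup (Y : Module.End F V) : Ydn e Y + Yup e Y = Y := by
  apply Module.Basis.ext e
  intro x
  apply e.repr.injective
  rw [LinearMap.add_apply, map_add]
  rw [Ydn, Yup, trunc_repr, trunc_repr]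
  exact Finsupp.filter_pos_add_filter_neg _ _

lemma Ydn_Pb (Y : Module.End F V) : Ydn e Y * PbP e = 0 := by
  apply Module.Basis.ext e
  intro x
  rw [Module.End.mul_apply, PbP_apply, LinearMap.zero_apply]
  by_cases h : x.val.1 = 1
  · rw [if_pos h]
    apply e.repr.map_eq_zero_iff.mp
    rw [Ydn, trunc_repr]
    ext y
    rw [Finsupp.filter_apply, if_neg (by have := y.prop.1; omega), Finsupp.zero_apply]
  · rw [if_neg h, map_zero]

lemma Pt_Yup {t : ℤ} (ht : 1 ≤ t) {Y : Module.End F V} (hY : Y ∈ oGE r d e t) :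
    PtP e * Yup e Y = 0 := by
  apply Module.Basis.ext e
  intro x
  rw [Module.End.mul_apply, LinearMap.zero_apply]
  have hrepr : Yup e Y (e x) = e.repr.symm ((e.repr (Y (e x))).filter
      (fun y => ¬ y.val.1 < x.val.1)) := by
    apply e.repr.injective
    rw [Yup, trunc_repr, LinearEquiv.apply_symm_apply]
  rw [hrepr]
  apply Pt_kill
  intro w hw
  rw [Finsupp.filter_apply] at hw
  by_cases hc : ¬ w.val.1 < x.val.1
  · rw [if_pos hc] at hw
    obtain ⟨hx2, hple⟩ := hY x w hw
    intro hww
    obtain ⟨hxa, hxb, hxc, -, -⟩ := x.prop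
    obtain ⟨hwa, hwb, hwc, -, -⟩ := w.prop
    have := pfun_mono (i := x.val.1 - 1) (j := x.val.2.1) (i' := w.val.1) (j' := w.val.2.1)
      (by omega) (by omega) hxc hwa hwb hwc (by omega)
    omega
  · rw [if_neg hc] at hw
    exact absurd rfl hw

lemma repr_Ydn_ne {Y : Module.End F V} {x y : RIdx r d}
    (h : e.repr (Ydn e Y (e x)) y ≠ 0) : y.val.1 < x.val.1 ∧ e.repr (Y (e x)) y ≠ 0 :=
  repr_trunc_ne e _ Y h

lemma repr_Yup_ne {Y : Module.End F V} {x y : RIdx r d}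
    (h : e.repr (Yup e Y (e x)) y ≠ 0) : x.val.1 ≤ y.val.1 ∧ e.repr (Y (e x)) y ≠ 0 := by
  obtain ⟨h1, h2⟩ := repr_trunc_ne e _ Y h
  exact ⟨by omega, h2⟩

include hX0 hXs in
lemma Wzero (Y : Module.End F V) (s : ℕ) :
    X ^ (s + 1) * (Ydn e Y * Zop e ^ (s + 1)) * PbP e = 0 := by
  apply Module.Basis.ext e
  intro x
  rw [Module.End.mul_apply, Module.End.mul_apply, Module.End.mul_apply, PbP_apply,
    LinearMap.zero_apply]
  by_cases h : x.val.1 = 1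
  · rw [if_pos h, Zpow_apply]
    by_cases h2 : x.val.1 + (s + 1) ≤ x.val.2.1
    · rw [dif_pos h2]
      have hrepr : Ydn e Y (e (upI x (s+1) h2)) = e.repr.symm ((e.repr (Y (e (upI x (s+1) h2)))).filter
          (fun y => y.val.1 < (upI x (s+1) h2).val.1)) := by
        apply e.repr.injective
        rw [Ydn, trunc_repr, LinearEquiv.apply_symm_apply]
      rw [hrepr]
      apply Xpow_kill e X hX0 hXs
      intro w hw
      rw [Finsupp.filter_apply] at hw
      by_cases hc : w.val.1 < (upI x (s+1) h2).val.1
      · have : (upI x (s+1) h2).val.1 = x.val.1 + (s+1) := rfl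
        omega
      · rw [if_neg hc] at hw
        exact absurd rfl hw
    · rw [dif_neg h2, map_zero, map_zero]
  · rw [if_neg h, map_zero, map_zero, map_zero]

include hX0 hXs in
lemma comm_formula {t : ℤ} (ht : 1 ≤ t) {Y : Module.End F V} (hY : Y ∈ oGE r d e t)
    (m : ℕ) (hrm : r = m + 1) :
    X * ((∑ s ∈ Finset.range (m+1), Zop e ^ s * (Zop e * Yup e Y) * X ^ s)
        - (∑ s ∈ Finset.range (m+1), X ^ s * (Ydn e Y * Zop e) * Zop e ^ s))
      - ((∑ s ∈ Finset.range (m+1), Zop e ^ s * (Zop e * Yup e Y) * X ^ s)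
        - (∑ s ∈ Finset.range (m+1), X ^ s * (Ydn e Y * Zop e) * Zop e ^ s)) * X
    = Y - ∑ s ∈ Finset.range m, PtP e * Zop e ^ s * (Zop e * Yup e Y) * X ^ (s+1) := by
  have hXr : X ^ (m+1) = 0 := by rw [← hrm]; exact Xpow_r e X hX0 hXs
  have hXZ : X * Zop e = 1 - PtP e := XZ_rel e X hX0 hXs
  have hZX : Zop e * X = 1 - PbP e := ZX_rel e X hX0 hXs
  set G := Zop e * Yup e Y with hG
  set E := Ydn e Y * Zop e with hE
  set U := ∑ s ∈ Finset.range (m+1), Zop e ^ s * G * X ^ s with hU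
  set D := ∑ s ∈ Finset.range (m+1), X ^ s * E * Zop e ^ s with hD
  -- down part
  have hdn1 : D * X = (∑ s ∈ Finset.range m, X * (X ^ s * E * Zop e ^ s)) + Ydn e Y := by
    rw [hD, Finset.sum_mul, Finset.sum_range_succ']
    congr 1
    · apply Finset.sum_congr rfl
      intro s _
      have hz : Zop e ^ (s+1) * X = Zop e ^ s - Zop e ^ s * PbP e := by
        rw [pow_succ, mul_assoc, hZX, mul_sub, mul_one]
      have hw : X ^ (s+1) * E * (Zop e ^ s * PbP e) = 0 := by
        have h0 := Wzero e X hX0 hXs Y s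
        calc X ^ (s+1) * E * (Zop e ^ s * PbP e)
            = X ^ (s + 1) * (Ydn e Y * Zop e ^ (s + 1)) * PbP e := by
              rw [hE]
              simp only [mul_assoc, pow_succ']
          _ = 0 := h0
      calc X ^ (s+1) * E * Zop e ^ (s+1) * X
          = X ^ (s+1) * E * (Zop e ^ (s+1) * X) := by simp only [mul_assoc]
        _ = X ^ (s+1) * E * Zop e ^ s - X ^ (s+1) * E * (Zop e ^ s * PbP e) := by
              rw [hz, mul_sub, mul_assoc]
        _ = X * (X ^ s * E * Zop e ^ s) := by rw [hw, sub_zero, pow_succ']; simp only [mul_assoc]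
    · calc X ^ 0 * E * Zop e ^ 0 * X = E * X := by simp only [pow_zero, one_mul, mul_one]
        _ = Ydn e Y * (Zop e * X) := by rw [hE, mul_assoc]
        _ = Ydn e Y - Ydn e Y * PbP e := by rw [hZX, mul_sub, mul_one]
        _ = Ydn e Y := by rw [Ydn_Pb, sub_zero]
  have hdn2 : X * D = ∑ s ∈ Finset.range m, X * (X ^ s * E * Zop e ^ s) := by
    rw [hD, Finset.mul_sum, Finset.sum_range_succ]
    have : X * (X ^ m * E * Zop e ^ m) = 0 := by
      calc X * (X ^ m * E * Zop e ^ m) = X ^ (m+1) * (E * Zop e ^ m) := by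
            rw [pow_succ']; simp only [mul_assoc]
        _ = 0 := by rw [hXr, zero_mul]
    rw [this, add_zero]
  -- up part
  have hup1 : X * U = (∑ s ∈ Finset.range m,
      (Zop e ^ s * G * X ^ s * X - PtP e * Zop e ^ s * G * X ^ (s+1))) + Yup e Y := by
    rw [hU, Finset.mul_sum, Finset.sum_range_succ']
    congr 1
    · apply Finset.sum_congr rfl
      intro s _
      have hxz : X * Zop e ^ (s+1) = Zop e ^ s - PtP e * Zop e ^ s := by
        rw [pow_succ', ← mul_assoc, hXZ, sub_mul, one_mul]
      calc X * (Zop e ^ (s+1) * G * X ^ (s+1))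
          = (X * Zop e ^ (s+1)) * G * X ^ (s+1) := by simp only [mul_assoc]
        _ = Zop e ^ s * G * X ^ (s+1) - PtP e * Zop e ^ s * G * X ^ (s+1) := by
              rw [hxz, sub_mul, sub_mul]
        _ = Zop e ^ s * G * X ^ s * X - PtP e * Zop e ^ s * G * X ^ (s+1) := by
              rw [pow_succ]; simp only [mul_assoc]
    · calc X * (Zop e ^ 0 * G * X ^ 0) = X * G := by simp only [pow_zero, one_mul, mul_one]
        _ = (X * Zop e) * Yup e Y := by rw [hG]; simp only [mul_assoc]
        _ = Yup e Y - PtP e * Yup e Y := by rw [hXZ, sub_mul, one_mul]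
        _ = Yup e Y := by rw [Pt_Yup e ht hY, sub_zero]
  have hup2 : U * X = ∑ s ∈ Finset.range m, Zop e ^ s * G * X ^ s * X := by
    rw [hU, Finset.sum_mul, Finset.sum_range_succ]
    have : Zop e ^ m * G * X ^ m * X = 0 := by
      calc Zop e ^ m * G * X ^ m * X = Zop e ^ m * G * X ^ (m+1) := by
            rw [pow_succ]; simp only [mul_assoc]
        _ = 0 := by rw [hXr, mul_zero]
    rw [this, add_zero]
  have hsplit := Ydn_add_Yup e Y
  calc X * (U - D) - (U - D) * X
      = (X * U - U * X) - (X * D - D * X) := by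
        rw [mul_sub, sub_mul]; abel
    _ = (Yup e Y - ∑ s ∈ Finset.range m, PtP e * Zop e ^ s * G * X ^ (s+1))
        - (- Ydn e Y) := by
        rw [hup1, hup2, hdn1, hdn2, Finset.sum_sub_distrib]
        abel
    _ = Y - ∑ s ∈ Finset.range m, PtP e * Zop e ^ s * (Zop e * Yup e Y) * X ^ (s+1) := by
        rw [← hG]
        conv_rhs => rw [← hsplit]
        abel

lemma nGE_add {t : ℤ} {A B : Module.End F V} (hA : A ∈ nGE r d e t) (hB : B ∈ nGE r d e t) :
    A + B ∈ nGE r d e t := by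
  intro x y h
  rw [LinearMap.add_apply, map_add, Finsupp.add_apply] at h
  rcases (by by_contra hc; push_neg at hc; rw [hc.1, hc.2, add_zero] at h; exact h rfl :
      e.repr (A (e x)) y ≠ 0 ∨ e.repr (B (e x)) y ≠ 0) with h' | h'
  · exact hA x y h'
  · exact hB x y h'

include hX0 hXs in
lemma dn_term_mem {t : ℤ} {Y : Module.End F V} (hY : Y ∈ oGE r d e t) (s : ℕ) :
    X ^ s * (Ydn e Y * Zop e) * Zop e ^ s ∈ nGE r d e t := by
  intro z w h
  obtain ⟨z1, hz1, h2⟩ := repr_comp_ne e (X ^ s * (Ydn e Y * Zop e)) (Zop e ^ s) z w h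
  obtain ⟨z2, hz2, h3⟩ := repr_comp_ne e (X ^ s) (Ydn e Y * Zop e) z1 w h2
  obtain ⟨z3, hz3, h4⟩ := repr_comp_ne e (Ydn e Y) (Zop e) z1 z2 hz2
  obtain ⟨c1a, c1b, c1c⟩ := repr_Zpow_ne e hz1
  obtain ⟨c3a, c3b, c3c⟩ := repr_Z_ne e hz3
  obtain ⟨cYa, cYb⟩ := repr_Ydn_ne e h4
  obtain ⟨cXa, cXb, cXc⟩ := repr_Xpow_ne e X hX0 hXs h3
  obtain ⟨hm1, hm2⟩ := hY z3 z2 cYb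
  have e31 : z3.val.1 - 1 = z.val.1 + s := by omega
  have e32 : z3.val.2.1 = z.val.2.1 := by rw [c3c, c1c]
  have e21 : z2.val.1 = w.val.1 + s := by omega
  have e22 : z2.val.2.1 = w.val.2.1 := by rw [← cXc]
  rw [e31, e32, e21, e22] at hm2
  have hzw : w.val.1 ≤ z.val.1 := by omega
  have g1 := pfun_gap r (z.val.1 + s) s z.val.2.1 (by omega)
  have g2 := pfun_gap r (w.val.1 + s) s w.val.2.1 (by omega)
  rw [show z.val.1 + s - s = z.val.1 from by omega] at g1
  rw [show w.val.1 + s - s = w.val.1 from by omega] at g2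
  have hsz : (0 : ℤ) ≤ (s : ℤ) := by omega
  have hzwz : (0 : ℤ) ≤ (z.val.1 : ℤ) - (w.val.1 : ℤ) := by
    have : (w.val.1 : ℤ) ≤ (z.val.1 : ℤ) := by exact_mod_cast hzw
    omega
  push_cast at g1 g2
  nlinarith [mul_nonneg hsz hzwz, g1, g2, hm2]

include hX0 hXs in
lemma up_term_mem {t : ℤ} {Y : Module.End F V} (hY : Y ∈ oGE r d e t) (s : ℕ) :
    Zop e ^ s * (Zop e * Yup e Y) * X ^ s ∈ nGE r d e t := by
  intro z w h
  obtain ⟨a, ha, h2⟩ := repr_comp_ne e (Zop e ^ s * (Zop e * Yup e Y)) (X ^ s) z w h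
  obtain ⟨b, hb, h3⟩ := repr_comp_ne e (Zop e ^ s) (Zop e * Yup e Y) a w h2
  obtain ⟨c, hc, h4⟩ := repr_comp_ne e (Zop e) (Yup e Y) a b hb
  obtain ⟨cXa, cXb, cXc⟩ := repr_Xpow_ne e X hX0 hXs ha
  obtain ⟨cca, ccb⟩ := repr_Yup_ne e hc
  obtain ⟨cZa, cZb, cZc⟩ := repr_Z_ne e h4
  obtain ⟨cWa, cWb, cWc⟩ := repr_Zpow_ne e h3
  obtain ⟨hm1, hm2⟩ := hY a c ccb
  -- coords: a.1 = z.1 - s, c.1 = w.1 - s - 1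
  have ea1 : a.val.1 - 1 = z.val.1 - s - 1 := by omega
  have ea2 : a.val.2.1 = z.val.2.1 := by rw [cXc]
  have ec1 : c.val.1 = w.val.1 - s - 1 := by omega
  have ec2 : c.val.2.1 = w.val.2.1 := by rw [cWc, cZc]
  rw [ea1, ea2, ec1, ec2] at hm2
  have hzw : z.val.1 < w.val.1 := by omega
  have hs1 : s + 1 ≤ z.val.1 := by omega
  have hs2 : s + 1 ≤ w.val.1 := by omega
  have g1 := pfun_gap r z.val.1 (s+1) z.val.2.1 hs1
  have g2 := pfun_gap r w.val.1 (s+1) w.val.2.1 hs2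
  rw [show z.val.1 - (s+1) = z.val.1 - s - 1 from by omega] at g1
  rw [show w.val.1 - (s+1) = w.val.1 - s - 1 from by omega] at g2
  have hsz : (0 : ℤ) ≤ (s : ℤ) + 1 := by omega
  have hzwz : (0 : ℤ) ≤ (w.val.1 : ℤ) - (z.val.1 : ℤ) := by
    have : (z.val.1 : ℤ) ≤ (w.val.1 : ℤ) := by exact_mod_cast le_of_lt hzw
    omega
  push_cast at g1 g2
  nlinarith [mul_nonneg hsz hzwz, g1, g2, hm2]

set_option maxHeartbeats 1000000 in
include hX0 hXs in
lemma R_term_mem {t : ℤ} {Y : Module.End F V} (hY : Y ∈ oGE r d e t) (s : ℕ) :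
    PtP e * Zop e ^ s * (Zop e * Yup e Y) * X ^ (s+1) ∈ oGE r d e (t + 1) := by
  intro x w h
  obtain ⟨a, ha, h2⟩ := repr_comp_ne e (PtP e * Zop e ^ s * (Zop e * Yup e Y)) (X ^ (s+1)) x w h
  obtain ⟨c, hc, h3⟩ := repr_comp_ne e (PtP e * Zop e ^ s) (Zop e * Yup e Y) a w h2
  obtain ⟨cc, hcc, h4⟩ := repr_comp_ne e (Zop e) (Yup e Y) a c hc
  obtain ⟨q, hq, h5⟩ := repr_comp_ne e (PtP e) (Zop e ^ s) c w h3
  obtain ⟨cXa, cXb, cXc⟩ := repr_Xpow_ne e X hX0 hXs ha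
  obtain ⟨cca, ccb⟩ := repr_Yup_ne e hcc
  obtain ⟨cZa, cZb, cZc⟩ := repr_Z_ne e h4
  obtain ⟨cQa, cQb, cQc⟩ := repr_Zpow_ne e hq
  obtain ⟨cPq, cPt⟩ := repr_Pt_ne e h5
  subst cPq
  obtain ⟨hm1, hm2⟩ := hY a cc ccb
  -- coords: a.1 = x.1 - s - 1, cc.1 = w.1 - s - 1 (w = q, q.1 = c.1 + s, c.1 = cc.1+1)
  have ea1 : a.val.1 - 1 = x.val.1 - 1 - (s + 1) := by omega
  have ea2 : a.val.2.1 = x.val.2.1 := by rw [cXc]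
  have ec1 : cc.val.1 = w.val.1 - (s + 1) := by omega
  have ec2 : cc.val.2.1 = w.val.2.1 := by rw [cQc, cZc]
  rw [ea1, ea2, ec1, ec2] at hm2
  have hx1 : s + 2 < x.val.1 := by omega
  have hxw : x.val.1 ≤ w.val.1 := by omega
  have hs1 : s + 1 ≤ x.val.1 - 1 := by omega
  have hs2 : s + 1 ≤ w.val.1 := by omega
  refine ⟨by omega, ?_⟩
  have g1 := pfun_gap r (x.val.1 - 1) (s+1) x.val.2.1 hs1
  have g2 := pfun_gap r w.val.1 (s+1) w.val.2.1 hs2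
  have hsz : (1 : ℤ) ≤ (s : ℤ) + 1 := by omega
  have hxwz : (0 : ℤ) ≤ (w.val.1 : ℤ) - (x.val.1 : ℤ) := by
    have : (x.val.1 : ℤ) ≤ (w.val.1 : ℤ) := by exact_mod_cast hxw
    omega
  have hcx : ((x.val.1 - 1 : ℕ) : ℤ) = (x.val.1 : ℤ) - 1 := by omega
  push_cast [hcx] at g1 g2
  nlinarith [mul_nonneg (by linarith : (0:ℤ) ≤ (s:ℤ) + 1) hxwz, g1, g2, hm2, hsz]

lemma oGE_sum {t : ℤ} {ι : Type*} {e : Module.Basis (RIdx r d) F V} (s : Finset ι)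
    (f : ι → Module.End F V) (hf : ∀ i ∈ s, f i ∈ oGE r d e t) :
    (∑ i ∈ s, f i) ∈ oGE r d e t := by
  intro x y h
  rw [LinearMap.sum_apply, map_sum, Finsupp.finset_sum_apply] at h
  obtain ⟨i, hi, hne⟩ := Finset.exists_ne_zero_of_sum_ne_zero h
  exact hf i hi x y hne

include hX0 hXs in
lemma part2 (hr : 1 ≤ r) {t : ℤ} (ht : 1 ≤ t) (Y : Module.End F V) (hY : Y ∈ oGE r d e t) :
    ∃ u ∈ nGE r d e t, Y - (X * u - u * X) ∈ oGE r d e (t + 1) := by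
  obtain ⟨m, hrm⟩ : ∃ m, r = m + 1 := ⟨r - 1, by omega⟩
  refine ⟨(∑ s ∈ Finset.range (m+1), Zop e ^ s * (Zop e * Yup e Y) * X ^ s)
        - (∑ s ∈ Finset.range (m+1), X ^ s * (Ydn e Y * Zop e) * Zop e ^ s), ?_, ?_⟩
  · rw [sub_eq_add_neg]
    apply nGE_add
    · exact nGE_sum _ _ fun s _ => up_term_mem e X hX0 hXs hY s
    · exact nGE_neg (nGE_sum _ _ fun s _ => dn_term_mem e X hX0 hXs hY s)
  · rw [comm_formula e X hX0 hXs ht hY m hrm, sub_sub_cancel]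
    exact oGE_sum _ _ fun s _ => R_term_mem e X hX0 hXs hY s

end Part2

end S13

/-- for `t ≥ 1`: (i) for every `u ∈ 𝔫^{≥t}`, `id + u` is invertible and
`(id+u)⁻¹ ∘ X ∘ (id+u) − X ∈ 𝔬^{≥t}`; (ii) for every `Y ∈ 𝔬^{≥t}` there is
`u ∈ 𝔫^{≥t}` with `Y − (X∘u − u∘X) ∈ 𝔬^{≥t+1}`. -/
theorem stmt_13 (r : ℕ) (hr : 1 ≤ r) (d : ℕ → ℕ) (hd : 1 ≤ d r)
    (F : Type*) [Field F] [CharZero F] (V : Type*) [AddCommGroup V] [Module F V]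
    (e : Module.Basis (RIdx r d) F V) (X : Module.End F V)
    (hX0 : ∀ x : RIdx r d, x.val.1 = 1 → X (e x) = 0)
    (hXs : ∀ x y : RIdx r d, x.val.1 = y.val.1 + 1 → x.val.2 = y.val.2 →
      X (e x) = e y)
    (t : ℤ) (ht : 1 ≤ t) :
    (∀ u ∈ nGE r d e t, ∃ B : Module.End F V,
      B * (1 + u) = 1 ∧ (1 + u) * B = 1 ∧
        B * X * (1 + u) - X ∈ oGE r d e t) ∧
    (∀ Y ∈ oGE r d e t, ∃ u ∈ nGE r d e t,
      Y - (X * u - u * X) ∈ oGE r d e (t + 1)) := by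
  constructor
  · intro u hu
    exact S13.part1 e X hX0 hXs ht u hu
  · intro Y hY
    exact S13.part2 e X hX0 hXs hr ht Y hY
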